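/- Let p be an odd prime and m, n ≥ 0 integers. If p divides m, then N(m,n) = N(m − p, n − 2) + N(m/p, n); if m ≡ 1 (mod p), then N(m,n) = N(m − p, n − 2) + N((m−1)/p, n − 1). (Here terms with negative first argument, and N(·, n') with n' < 0, are 0 by convention.) -/

import Mathlib

/-- The set `S_r(m,n)` of solutions of the linear system, encoded as pairs of
finitely supported sequences `(a, b) : (ℕ → ℕ) × (ℕ → ℕ)` where index `i`
(for `0 ≤ i < r`) corresponds to `a_{i+1}`, `b_{i+1}`. -/
def SolSet (p r m n : ℕ) : Set ((ℕ → ℕ) × (ℕ → ℕ)) :=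
  {ab | (∀ i, r ≤ i → ab.1 i = 0) ∧ (∀ i, r ≤ i → ab.2 i = 0) ∧
        (∀ i, ab.2 i ≤ 1) ∧
        2 * (∑ i ∈ Finset.range r, ab.1 i) + ∑ i ∈ Finset.range r, ab.2 i = n ∧
        ab.2 0 + ∑ i ∈ Finset.range r, (ab.1 i + ab.2 (i + 1)) * p ^ (i + 1) = m}

/-- `N_r(m,n)`, the number of solutions of the linear system. -/
noncomputable def Ncard (p r m n : ℕ) : ℕ := Nat.card (SolSet p r m n)

/-- The stable value `N(m,n)` (for `p ≥ 2` one has `p ^ (m+1) > m`, so `r = m + 1`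
is in the stable range), with the convention that it vanishes for negative arguments. -/
noncomputable def Nstab (p : ℕ) (m n : ℤ) : ℕ :=
  if 0 ≤ m ∧ 0 ≤ n then Ncard p (m.toNat + 1) m.toNat n.toNat else 0

lemma mem_solset {p r m n : ℕ} {ab : (ℕ → ℕ) × (ℕ → ℕ)} :
    ab ∈ SolSet p r m n ↔
      (∀ i, r ≤ i → ab.1 i = 0) ∧ (∀ i, r ≤ i → ab.2 i = 0) ∧ (∀ i, ab.2 i ≤ 1) ∧
      2 * (∑ i ∈ Finset.range r, ab.1 i) + ∑ i ∈ Finset.range r, ab.2 i = n ∧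
      ab.2 0 + ∑ i ∈ Finset.range r, (ab.1 i + ab.2 (i + 1)) * p ^ (i + 1) = m := Iff.rfl

lemma solset_finite (p r m n : ℕ) : (SolSet p r m n).Finite := by
  have key : ∀ ab ∈ SolSet p r m n, ∀ i, ab.1 i ≤ n ∧ ab.2 i ≤ 1 := by
    rintro ⟨a, b⟩ ⟨ha, hb, hb1, hn, hm⟩ i
    dsimp only at *
    refine ⟨?_, hb1 i⟩
    by_cases hi : i < r
    · have h1 : a i ≤ ∑ j ∈ Finset.range r, a j :=
        Finset.single_le_sum (fun _ _ => Nat.zero_le _) (Finset.mem_range.2 hi)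
      omega
    · rw [ha i (by omega)]; exact Nat.zero_le _
  have : Finite ↥(SolSet p r m n) := by
    apply Finite.of_injective (fun s : ↥(SolSet p r m n) =>
      ((fun i : Fin r => (⟨s.1.1 i, Nat.lt_succ_of_le (key s.1 s.2 i).1⟩ : Fin (n+1))),
       (fun i : Fin r => (⟨s.1.2 i, Nat.lt_succ_of_le (key s.1 s.2 i).2⟩ : Fin 2))))
    rintro ⟨⟨a, b⟩, ha, hb, _, _, _⟩ ⟨⟨a', b'⟩, ha', hb', _, _, _⟩ h
    simp only [Prod.mk.injEq, funext_iff, Fin.mk.injEq] at h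
    ext i
    · by_cases hi : i < r
      · exact h.1 ⟨i, hi⟩
      · rw [ha i (by omega), ha' i (by omega)]
    · by_cases hi : i < r
      · exact h.2 ⟨i, hi⟩
      · rw [hb i (by omega), hb' i (by omega)]
  exact Set.toFinite _

lemma sum_split0 (g : ℕ → ℕ) (r : ℕ) :
    ∑ i ∈ Finset.range (r+1), g i = g 0 + ∑ i ∈ Finset.range r, g (i+1) := by
  rw [Finset.sum_range_succ']; ring

lemma solset_succ {p r m n : ℕ} (hp : 2 ≤ p) (h : m < p ^ r) :
    SolSet p (r+1) m n = SolSet p r m n := by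
  ext ⟨a, b⟩
  simp only [mem_solset]
  constructor
  · rintro ⟨ha, hb, hb1, hn, hm⟩
    rw [Finset.sum_range_succ] at hn hm
    rw [Finset.sum_range_succ (fun i => b i)] at hn
    have hbr1 : b (r+1) = 0 := hb _ (le_refl _)
    have har : a r = 0 := by
      by_contra hne
      have h1 : p ^ (r+1) ≤ (a r + b (r+1)) * p ^ (r+1) :=
        Nat.le_mul_of_pos_left _ (by omega)
      have h2 : p ^ r < p ^ (r+1) := Nat.pow_lt_pow_succ (by omega)
      omega
    have hbr : b r = 0 := by
      rcases Nat.eq_zero_or_pos r with h0 | hpos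
      · subst h0
        rw [pow_zero] at h
        have := hb1 0
        simp only [Finset.range_zero, Finset.sum_empty] at hm
        omega
      · obtain ⟨r', rfl⟩ : ∃ r', r = r' + 1 := ⟨r - 1, by omega⟩
        rw [Finset.sum_range_succ] at hm
        by_contra hne
        have h1 : p ^ (r'+1) ≤ (a r' + b (r'+1)) * p ^ (r'+1) :=
          Nat.le_mul_of_pos_left _ (by omega)
        omega
    refine ⟨fun i hi => if hir : i = r then hir ▸ har else ha i (by omega),
      fun i hi => if hir : i = r then hir ▸ hbr else hb i (by omega), hb1, by omega, by
        rw [har, hbr1] at hm; simpa using hm⟩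
  · rintro ⟨ha, hb, hb1, hn, hm⟩
    have har : a r = 0 := ha r (le_refl _)
    have hbr : b r = 0 := hb r (le_refl _)
    have hbr1 : b (r+1) = 0 := hb _ (by omega)
    refine ⟨fun i hi => ha i (by omega), fun i hi => hb i (by omega), hb1, ?_, ?_⟩
    · rw [Finset.sum_range_succ, Finset.sum_range_succ (fun i => b i), har, hbr]; omega
    · rw [Finset.sum_range_succ, har, hbr1]; simpa using hm

lemma solset_stable {p r m n : ℕ} (hp : 2 ≤ p) (h : m < p ^ r) :
    ∀ r', r ≤ r' → SolSet p r' m n = SolSet p r m n := by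
  intro r' hr
  induction r' with
  | zero => obtain rfl := Nat.le_zero.mp hr; rfl
  | succ k ih =>
    rcases Nat.lt_or_ge r (k+1) with h1 | h2
    · have hk := ih (by omega)
      have hmk : m < p ^ k :=
        lt_of_lt_of_le h (Nat.pow_le_pow_right (by omega) (by omega))
      rw [solset_succ hp hmk, hk]
    · have : r = k + 1 := by omega
      subst this; rfl

lemma lt_pow_succ_self {p : ℕ} (hp : 2 ≤ p) (m : ℕ) : m < p ^ (m+1) :=
  lt_of_lt_of_le (Nat.lt_two_pow_self (n := m))
    (le_trans (Nat.pow_le_pow_left hp m) (Nat.pow_le_pow_right (by omega) (by omega)))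

lemma cardA (p r m n : ℕ) :
    {s ∈ SolSet p (r+1) (m + p) (n + 2) | 1 ≤ s.1 0}.ncard = (SolSet p (r+1) m n).ncard := by
  have hinj : Function.Injective
      (fun s : (ℕ → ℕ) × (ℕ → ℕ) => (Function.update s.1 0 (s.1 0 + 1), s.2)) := by
    rintro ⟨a, b⟩ ⟨a', b'⟩ h
    simp only [Prod.mk.injEq] at h
    obtain ⟨h1, h2⟩ := h
    refine Prod.ext ?_ h2
    funext i
    rcases Nat.eq_zero_or_pos i with rfl | hi
    · have := congrFun h1 0
      simpa using this
    · have := congrFun h1 i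
      rwa [Function.update_of_ne (by omega), Function.update_of_ne (by omega)] at this
  have himg : (fun s : (ℕ → ℕ) × (ℕ → ℕ) => (Function.update s.1 0 (s.1 0 + 1), s.2)) ''
      SolSet p (r+1) m n = {s ∈ SolSet p (r+1) (m + p) (n + 2) | 1 ≤ s.1 0} := by
    ext ⟨a, b⟩
    simp only [Set.mem_image, Set.mem_setOf_eq, mem_solset, Prod.mk.injEq]
    constructor
    · rintro ⟨⟨a', b'⟩, ⟨ha, hb, hb1, hn, hm⟩, h1, h2⟩
      dsimp only at h1 h2 ha hb hb1 hn hm ⊢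
      subst h1 h2
      have upd_eq : ∀ i, Function.update a' 0 (a' 0 + 1) (i+1) = a' (i+1) :=
        fun i => Function.update_of_ne (by omega) _ _
      have upd0 : Function.update a' 0 (a' 0 + 1) 0 = a' 0 + 1 := Function.update_self _ _ _
      rw [sum_split0 (fun i => a' i) r] at hn
      rw [sum_split0 (fun i => (a' i + b' (i+1)) * p ^ (i+1)) r] at hm
      refine ⟨⟨fun i hi => ?_, hb, hb1, ?_, ?_⟩, ?_⟩
      · rw [Function.update_of_ne (by omega)]; exact ha i hi
      · rw [sum_split0 (fun i => Function.update a' 0 (a' 0 + 1) i) r]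
        simp only [upd_eq, upd0]
        omega
      · rw [sum_split0 (fun i => (Function.update a' 0 (a' 0 + 1) i + b' (i+1)) * p ^ (i+1)) r]
        simp only [upd_eq, upd0]
        have expand : (a' 0 + 1 + b' (0+1)) * p ^ (0+1) = (a' 0 + b' (0+1)) * p ^ (0+1) + p := by
          ring
        omega
      · simp only [upd0]; omega
    · rintro ⟨⟨ha, hb, hb1, hn, hm⟩, h1⟩
      obtain ⟨a0', ha0⟩ : ∃ k, a 0 = k + 1 := ⟨a 0 - 1, by omega⟩
      refine ⟨(Function.update a 0 a0', b), ?_, ?_, rfl⟩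
      · have upd_eq : ∀ i, Function.update a 0 a0' (i+1) = a (i+1) :=
          fun i => Function.update_of_ne (by omega) _ _
        have upd0 : Function.update a 0 a0' 0 = a0' := Function.update_self _ _ _
        rw [sum_split0 (fun i => a i) r] at hn
        rw [sum_split0 (fun i => (a i + b (i+1)) * p ^ (i+1)) r] at hm
        rw [ha0] at hn hm
        refine ⟨fun i hi => ?_, hb, hb1, ?_, ?_⟩
        · show Function.update a 0 a0' i = 0
          rw [Function.update_of_ne (by omega)]; exact ha i hi
        · show 2 * (∑ i ∈ Finset.range (r+1), Function.update a 0 a0' i) +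
            ∑ i ∈ Finset.range (r+1), b i = n
          rw [sum_split0 (fun i => Function.update a 0 a0' i) r]
          simp only [upd_eq, upd0]
          omega
        · show b 0 + ∑ i ∈ Finset.range (r+1),
              (Function.update a 0 a0' i + b (i + 1)) * p ^ (i + 1) = m
          rw [sum_split0 (fun i => (Function.update a 0 a0' i + b (i+1)) * p ^ (i+1)) r]
          simp only [upd_eq, upd0]
          have expand : (a0' + 1 + b (0+1)) * p ^ (0+1) = (a0' + b (0+1)) * p ^ (0+1) + p := by
            ring
          omega
      · dsimp only
        rw [Function.update_self, Function.update_idem, ← ha0, Function.update_eq_self]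
  rw [← himg, Set.ncard_image_of_injective _ hinj]

def cons (x : ℕ) (f : ℕ → ℕ) : ℕ → ℕ := fun j => match j with
  | 0 => x
  | i+1 => f i

@[simp] lemma cons_zero (x : ℕ) (f : ℕ → ℕ) : cons x f 0 = x := rfl
@[simp] lemma cons_succ (x : ℕ) (f : ℕ → ℕ) (i : ℕ) : cons x f (i+1) = f i := rfl

lemma cardB {p : ℕ} (hp : 1 ≤ p) (r q n c : ℕ) (hc : c ≤ 1) :
    {s ∈ SolSet p (r+1) (c + p * q) (n + c) | s.1 0 = 0 ∧ s.2 0 = c}.ncard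
      = (SolSet p r q n).ncard := by
  have hinj : Function.Injective
      (fun s : (ℕ → ℕ) × (ℕ → ℕ) => (cons 0 s.1, cons c s.2)) := by
    rintro ⟨a, b⟩ ⟨a', b'⟩ h
    simp only [Prod.mk.injEq] at h
    obtain ⟨h1, h2⟩ := h
    refine Prod.ext (funext fun i => ?_) (funext fun i => ?_)
    · have := congrFun h1 (i+1); simpa using this
    · have := congrFun h2 (i+1); simpa using this
  have himg : (fun s : (ℕ → ℕ) × (ℕ → ℕ) => (cons 0 s.1, cons c s.2)) ''
      SolSet p r q n
      = {s ∈ SolSet p (r+1) (c + p * q) (n + c) | s.1 0 = 0 ∧ s.2 0 = c} := by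
    ext ⟨a, b⟩
    simp only [Set.mem_image, Set.mem_setOf_eq, mem_solset, Prod.mk.injEq]
    constructor
    · rintro ⟨⟨a', b'⟩, ⟨ha, hb, hb1, hn, hm⟩, h1, h2⟩
      dsimp only at h1 h2 ha hb hb1 hn hm
      subst h1 h2
      refine ⟨⟨fun i hi => ?_, fun i hi => ?_, fun i => ?_, ?_, ?_⟩, rfl, rfl⟩
      · obtain ⟨j, rfl⟩ : ∃ j, i = j + 1 := ⟨i - 1, by omega⟩
        rw [cons_succ]; exact ha j (by omega)
      · obtain ⟨j, rfl⟩ : ∃ j, i = j + 1 := ⟨i - 1, by omega⟩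
        rw [cons_succ]; exact hb j (by omega)
      · cases i with
        | zero => simpa using hc
        | succ j => simpa using hb1 j
      · rw [sum_split0 (fun i => cons 0 a' i) r, sum_split0 (fun i => cons c b' i) r]
        simp only [cons_zero, cons_succ]
        omega
      · rw [sum_split0 (fun i => (cons 0 a' i + cons c b' (i+1)) * p ^ (i+1)) r]
        simp only [cons_zero, cons_succ]
        have hfac : ∑ i ∈ Finset.range r, (a' i + b' (i+1)) * p ^ (i+1+1)
            = (∑ i ∈ Finset.range r, (a' i + b' (i+1)) * p ^ (i+1)) * p := by
          rw [Finset.sum_mul]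
          refine Finset.sum_congr rfl fun i _ => ?_
          rw [mul_assoc, ← pow_succ]
        rw [hfac]
        have : c + ((0 + b' 0) * p ^ (0+1)
            + (∑ i ∈ Finset.range r, (a' i + b' (i+1)) * p ^ (i+1)) * p)
            = c + p * (b' 0 + ∑ i ∈ Finset.range r, (a' i + b' (i+1)) * p ^ (i+1)) := by
          ring
        rw [this, hm]
    · rintro ⟨⟨ha, hb, hb1, hn, hm⟩, h1, h2⟩
      refine ⟨(fun i => a (i+1), fun i => b (i+1)), ?_, ?_⟩
      · rw [sum_split0 (fun i => a i) r, sum_split0 (fun i => b i) r] at hn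
        rw [sum_split0 (fun i => (a i + b (i+1)) * p ^ (i+1)) r] at hm
        rw [h1, h2] at hm
        rw [h2] at hn
        refine ⟨fun i hi => ha (i+1) (by omega), fun i hi => hb (i+1) (by omega),
          fun i => hb1 (i+1), ?_, ?_⟩
        · show 2 * (∑ i ∈ Finset.range r, a (i+1)) + ∑ i ∈ Finset.range r, b (i+1) = n
          omega
        have hfac : ∑ i ∈ Finset.range r, (a (i+1) + b (i+1+1)) * p ^ (i+1+1)
            = (∑ i ∈ Finset.range r, (a (i+1) + b (i+1+1)) * p ^ (i+1)) * p := by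
          rw [Finset.sum_mul]
          refine Finset.sum_congr rfl fun i _ => ?_
          rw [mul_assoc, ← pow_succ]
        rw [hfac] at hm
        have harr : c + ((0 + b (0+1)) * p ^ (0+1)
            + (∑ i ∈ Finset.range r, (a (i+1) + b (i+1+1)) * p ^ (i+1)) * p)
            = c + p * (b (0+1)
              + ∑ i ∈ Finset.range r, (a (i+1) + b (i+1+1)) * p ^ (i+1)) := by
          ring
        rw [harr] at hm
        have := Nat.eq_of_mul_eq_mul_left (by omega : 0 < p) (by omega :
          p * (b (0+1) + ∑ i ∈ Finset.range r, (a (i+1) + b (i+1+1)) * p ^ (i+1)) = p * q)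
        exact this
      · refine ⟨funext fun i => ?_, funext fun i => ?_⟩ <;>
          cases i with
          | zero => simp [h1, h2]
          | succ j => simp
  rw [← himg, Set.ncard_image_of_injective _ hinj]

lemma b0_eq {p r m n c : ℕ} (hp : 2 ≤ p) (hc : c ≤ 1) (hmc : m % p = c)
    {s : (ℕ → ℕ) × (ℕ → ℕ)} (hs : s ∈ SolSet p r m n) : s.2 0 = c := by
  obtain ⟨_, _, hb1, _, hm⟩ := hs
  have hdvd : p ∣ ∑ i ∈ Finset.range r, (s.1 i + s.2 (i + 1)) * p ^ (i + 1) :=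
    Finset.dvd_sum fun i _ => Dvd.dvd.mul_left (dvd_pow_self p (Nat.succ_ne_zero i)) _
  obtain ⟨k, hk⟩ := hdvd
  have hb0 := hb1 0
  have : (s.2 0 + p * k) % p = c := by rw [← hk, hm]; exact hmc
  rw [Nat.add_mul_mod_self_left, Nat.mod_eq_of_lt (by omega)] at this
  exact this

lemma ncard_split {p m n r c : ℕ} (hp : 2 ≤ p) (hc : c ≤ 1) (hmc : m % p = c) :
    (SolSet p r m n).ncard
      = {s ∈ SolSet p r m n | 1 ≤ s.1 0}.ncard
        + {s ∈ SolSet p r m n | s.1 0 = 0 ∧ s.2 0 = c}.ncard := by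
  rw [← Set.ncard_union_eq ?_ ?_ ?_]
  · congr 1
    ext s
    simp only [Set.mem_union, Set.mem_setOf_eq]
    constructor
    · intro hs
      rcases Nat.eq_zero_or_pos (s.1 0) with h0 | h0
      · exact Or.inr ⟨hs, h0, b0_eq hp hc hmc hs⟩
      · exact Or.inl ⟨hs, h0⟩
    · rintro (⟨hs, _⟩ | ⟨hs, _⟩) <;> exact hs
  · rw [Set.disjoint_left]
    rintro s ⟨_, h1⟩ ⟨_, h2, _⟩
    omega
  · exact (solset_finite p r m n).subset (Set.sep_subset _ _)
  · exact (solset_finite p r m n).subset (Set.sep_subset _ _)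

lemma A_empty_n {p r m n : ℕ} (hn : n ≤ 1) :
    {s ∈ SolSet p (r+1) m n | 1 ≤ s.1 0} = ∅ := by
  ext ⟨a, b⟩
  simp only [Set.mem_setOf_eq, mem_solset, Set.mem_empty_iff_false, iff_false, not_and]
  rintro ⟨ha, hb, hb1, hnn, hm⟩
  intro h1
  have : a 0 ≤ ∑ i ∈ Finset.range (r+1), a i :=
    Finset.single_le_sum (f := fun i => a i) (fun _ _ => Nat.zero_le _)
      (show 0 ∈ Finset.range (r+1) from Finset.mem_range.2 (Nat.succ_pos r))
  omega

lemma A_empty_m {p r m n : ℕ} (hm : m < p) :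
    {s ∈ SolSet p (r+1) m n | 1 ≤ s.1 0} = ∅ := by
  ext ⟨a, b⟩
  simp only [Set.mem_setOf_eq, mem_solset, Set.mem_empty_iff_false, iff_false, not_and]
  rintro ⟨ha, hb, hb1, hnn, hmm⟩
  intro h1
  have h2 : (a 0 + b (0+1)) * p ^ (0+1) ≤
      ∑ i ∈ Finset.range (r+1), (a i + b (i+1)) * p ^ (i+1) :=
    Finset.single_le_sum (f := fun i => (a i + b (i+1)) * p ^ (i+1))
      (fun _ _ => Nat.zero_le _)
      (show 0 ∈ Finset.range (r+1) from Finset.mem_range.2 (Nat.succ_pos r))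
  have h3 : p ≤ (a 0 + b (0+1)) * p ^ (0+1) := by
    rw [pow_one]
    exact Nat.le_mul_of_pos_left p (show 0 < a 0 + b (0+1) by omega)
  omega

lemma B_empty {p r m : ℕ} :
    {s ∈ SolSet p (r+1) m 0 | s.1 0 = 0 ∧ s.2 0 = 1} = ∅ := by
  ext ⟨a, b⟩
  simp only [Set.mem_setOf_eq, mem_solset, Set.mem_empty_iff_false, iff_false, not_and]
  rintro ⟨ha, hb, hb1, hnn, hm⟩
  intro h0 h1
  have : b 0 ≤ ∑ i ∈ Finset.range (r+1), b i :=
    Finset.single_le_sum (f := fun i => b i) (fun _ _ => Nat.zero_le _)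
      (show 0 ∈ Finset.range (r+1) from Finset.mem_range.2 (Nat.succ_pos r))
  omega

lemma nstab_eq {p : ℕ} (hp : 2 ≤ p) (m n r : ℕ) (hr : m < p ^ r) :
    Nstab p (m : ℤ) (n : ℤ) = (SolSet p r m n).ncard := by
  unfold Nstab Ncard
  rw [if_pos ⟨Int.ofNat_nonneg m, Int.ofNat_nonneg n⟩]
  simp only [Int.toNat_natCast]
  rw [Nat.card_coe_set_eq]
  have h1 : m < p ^ (min r (m+1)) := by
    rcases le_total r (m+1) with h | h
    · rwa [min_eq_left h]
    · rw [min_eq_right h]; exact lt_pow_succ_self hp m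
  rw [solset_stable hp h1 (m+1) (by omega), solset_stable hp h1 r (by omega)]

/-- the reformulated recursion for `N(m,n)`, an odd prime `p`. -/
theorem stmt7 (p : ℕ) (hp : p.Prime) (hodd : Odd p) (m n : ℕ) :
    (p ∣ m → Nstab p (m : ℤ) (n : ℤ) =
        Nstab p ((m : ℤ) - p) ((n : ℤ) - 2) + Nstab p ((m : ℤ) / p) (n : ℤ)) ∧
    (m % p = 1 → Nstab p (m : ℤ) (n : ℤ) =
        Nstab p ((m : ℤ) - p) ((n : ℤ) - 2) + Nstab p (((m : ℤ) - 1) / p) ((n : ℤ) - 1)) := by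
  have hp2 : 2 ≤ p := hp.two_le
  constructor
  · rintro ⟨q, rfl⟩
    set R : ℕ := p * q + 1 with hR
    have hstab1 : p * q < p ^ (R + 1) :=
      lt_of_lt_of_le (lt_pow_succ_self hp2 (p * q))
        (Nat.pow_le_pow_right (by omega) (by omega))
    have hqle : q ≤ p * q := Nat.le_mul_of_pos_left q (by omega)
    have hstab2 : q < p ^ R :=
      lt_of_le_of_lt hqle (lt_pow_succ_self hp2 (p * q))
    have hmc : p * q % p = 0 := Nat.mul_mod_right p q
    have harg : ((p * q : ℕ) : ℤ) / (p : ℤ) = (q : ℤ) := by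
      push_cast
      rw [Int.mul_ediv_cancel_left _ (by omega : (p : ℤ) ≠ 0)]
    have hB := cardB (by omega : 1 ≤ p) R q n 0 (by omega)
    simp only [Nat.zero_add, Nat.add_zero] at hB
    by_cases hcase : p ≤ p * q ∧ 2 ≤ n
    · obtain ⟨hc1, hc2⟩ := hcase
      have e1 : p * q - p + p = p * q := by omega
      have e2 : n - 2 + 2 = n := by omega
      have hA := cardA p R (p * q - p) (n - 2)
      rw [e1, e2] at hA
      have c1 : ((p * q : ℕ) : ℤ) - (p : ℤ) = ((p * q - p : ℕ) : ℤ) := by omega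
      have c2 : ((n : ℕ) : ℤ) - 2 = ((n - 2 : ℕ) : ℤ) := by omega
      rw [harg, c1, c2, nstab_eq hp2 (p * q) n (R + 1) hstab1,
        nstab_eq hp2 (p * q - p) (n - 2) (R + 1) (by omega),
        nstab_eq hp2 q n R hstab2,
        ncard_split hp2 (by omega : (0:ℕ) ≤ 1) hmc, hA, hB]
    · have hA0 : {s ∈ SolSet p (R+1) (p * q) n | 1 ≤ s.1 0}.ncard = 0 := by
        rcases not_and_or.mp hcase with h | h
        · rw [A_empty_m (by omega)]; exact Set.ncard_empty _
        · rw [A_empty_n (by omega)]; exact Set.ncard_empty _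
      have hq0 : p * q < p → p * q = 0 := by
        intro h
        rcases Nat.eq_zero_or_pos q with rfl | hq
        · ring
        · exact absurd (Nat.le_mul_of_pos_right p hq) (by omega)
      have hz : Nstab p (((p * q : ℕ) : ℤ) - (p:ℤ)) ((n : ℤ) - 2) = 0 := by
        unfold Nstab
        rw [if_neg]
        rcases not_and_or.mp hcase with h | h
        · have := hq0 (by omega)
          omega
        · omega
      rw [harg, hz, nstab_eq hp2 (p * q) n (R + 1) hstab1, nstab_eq hp2 q n R hstab2,
        ncard_split hp2 (by omega : (0:ℕ) ≤ 1) hmc, hA0, hB]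
  · intro hmc
    set q : ℕ := m / p with hqdef
    have hq : 1 + p * q = m := by
      rw [hqdef]
      have := Nat.div_add_mod m p
      omega
    set R : ℕ := m + 1 with hR
    have hstab1 : m < p ^ (R + 1) :=
      lt_of_lt_of_le (lt_pow_succ_self hp2 m)
        (Nat.pow_le_pow_right (by omega) (by omega))
    have hqle : q ≤ m := by
      have : q ≤ p * q := Nat.le_mul_of_pos_left q (by omega)
      omega
    have hstab2 : q < p ^ R := lt_of_le_of_lt hqle (lt_pow_succ_self hp2 m)
    have harg : ((m : ℕ) : ℤ) - 1 = (p : ℤ) * (q : ℤ) := by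
      rw [← hq]
      push_cast
      ring
    have harg2 : (((m : ℕ) : ℤ) - 1) / (p : ℤ) = (q : ℤ) := by
      rw [harg, Int.mul_ediv_cancel_left _ (by omega : (p : ℤ) ≠ 0)]
    have hAfin : ∀ M N : ℕ, ({s ∈ SolSet p (R+1) M N | 1 ≤ s.1 0}).ncard
        = ({s ∈ SolSet p (R+1) M N | 1 ≤ s.1 0}).ncard := fun _ _ => rfl
    by_cases hn : 1 ≤ n
    · -- B part available
      have hB := cardB (by omega : 1 ≤ p) R q (n - 1) 1 (le_refl 1)
      rw [hq, (by omega : n - 1 + 1 = n)] at hB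
      have c3 : ((n : ℕ) : ℤ) - 1 = ((n - 1 : ℕ) : ℤ) := by omega
      by_cases hcase : p ≤ m ∧ 2 ≤ n
      · obtain ⟨hc1, hc2⟩ := hcase
        have hA := cardA p R (m - p) (n - 2)
        rw [(by omega : m - p + p = m), (by omega : n - 2 + 2 = n)] at hA
        have c1 : ((m : ℕ) : ℤ) - (p : ℤ) = ((m - p : ℕ) : ℤ) := by omega
        have c2 : ((n : ℕ) : ℤ) - 2 = ((n - 2 : ℕ) : ℤ) := by omega
        rw [harg2, c1, c2, c3, nstab_eq hp2 m n (R + 1) hstab1,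
          nstab_eq hp2 (m - p) (n - 2) (R + 1) (by omega),
          nstab_eq hp2 q (n - 1) R hstab2,
          ncard_split hp2 (le_refl 1) hmc, hA, hB]
      · have hA0 : {s ∈ SolSet p (R+1) m n | 1 ≤ s.1 0}.ncard = 0 := by
          rcases not_and_or.mp hcase with h | h
          · rw [A_empty_m (by omega)]; exact Set.ncard_empty _
          · rw [A_empty_n (by omega)]; exact Set.ncard_empty _
        have hm1 : m < p → m = 1 := by
          intro h
          have := Nat.mod_eq_of_lt h
          omega
        have hz : Nstab p (((m : ℕ) : ℤ) - (p:ℤ)) ((n : ℤ) - 2) = 0 := by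
          unfold Nstab
          rw [if_neg]
          rcases not_and_or.mp hcase with h | h
          · have := hm1 (by omega)
            omega
          · omega
        rw [harg2, c3, hz, nstab_eq hp2 m n (R + 1) hstab1,
          nstab_eq hp2 q (n - 1) R hstab2,
          ncard_split hp2 (le_refl 1) hmc, hA0, hB]
    · -- n = 0
      have hn0 : n = 0 := by omega
      subst hn0
      have hA0 : {s ∈ SolSet p (R+1) m 0 | 1 ≤ s.1 0}.ncard = 0 := by
        rw [A_empty_n (by omega)]; exact Set.ncard_empty _
      have hB0 : {s ∈ SolSet p (R+1) m 0 | s.1 0 = 0 ∧ s.2 0 = 1}.ncard = 0 := by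
        rw [B_empty]; exact Set.ncard_empty _
      have hz1 : Nstab p (((m : ℕ) : ℤ) - (p:ℤ)) (((0:ℕ) : ℤ) - 2) = 0 := by
        unfold Nstab
        rw [if_neg]
        omega
      have hz2 : Nstab p ((q : ℕ) : ℤ) (((0:ℕ) : ℤ) - 1) = 0 := by
        unfold Nstab
        rw [if_neg]
        omega
      rw [harg2, hz1, hz2, nstab_eq hp2 m 0 (R + 1) hstab1,
        ncard_split hp2 (le_refl 1) hmc, hA0, hB0]
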